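/- arXiv:2311.05750 — 3 statements merged into one kernel-verified Lean document; each statement's English description precedes it below -/
import Mathlib

section
/- Let λ not be an eigenvalue of A, B̂_1,...,B̂_{n-1} an orthonormal complement of B̂ = B/‖B‖, and α_1,...,α_{n-1} ∈ ℝ arbitrary. Then the gain K = (B̂/‖B‖ + Σ_i α_i B̂_i)^T (A - λ I) satisfies det(λ I - A + B K) = 0, so the set of such gains is an (n-1)-dimensional affine family all assigning the eigenvalue λ. -/
open Matrix

/-- With `{B̂, B̂₁, …, B̂_{n-1}}` an orthonormal basis extending `B̂ = B/‖B‖`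
(so `I = B̂B̂ᵀ + Σᵢ B̂ᵢB̂ᵢᵀ`, `B̂ᵢᵀ B = 0`) and `λ` not an eigenvalue of `A`,
every gain `K = (B̂/‖B‖ + Σᵢ αᵢ B̂ᵢ)ᵀ (A - λ I)` satisfies
`det(λ I - A + B K) = 0`. Here `n = m + 1`. -/
theorem stmt_12 (m : ℕ) (A : Matrix (Fin (m + 1)) (Fin (m + 1)) ℝ)
    (B : Fin (m + 1) → ℝ)
    (hB : B ≠ 0)
    (l : ℝ)
    (hl : (A - l • (1 : Matrix (Fin (m + 1)) (Fin (m + 1)) ℝ)).det ≠ 0)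
    (Bh : Fin (m + 1) → ℝ)
    (hBh : Bh = (Real.sqrt (B ⬝ᵥ B))⁻¹ • B)
    (Bi : Fin m → Fin (m + 1) → ℝ)
    (horth : ∀ i, Bi i ⬝ᵥ B = 0)
    (hcomp : (1 : Matrix (Fin (m + 1)) (Fin (m + 1)) ℝ)
        = Matrix.vecMulVec Bh Bh + ∑ i : Fin m, Matrix.vecMulVec (Bi i) (Bi i))
    (α : Fin m → ℝ)
    (K : Fin (m + 1) → ℝ)
    (hK : K = ((Real.sqrt (B ⬝ᵥ B))⁻¹ • Bh + ∑ i : Fin m, α i • Bi i)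
        ᵥ* (A - l • (1 : Matrix (Fin (m + 1)) (Fin (m + 1)) ℝ))) :
    (l • (1 : Matrix (Fin (m + 1)) (Fin (m + 1)) ℝ) - A + Matrix.vecMulVec B K).det = 0 := by
  set M := A - l • (1 : Matrix (Fin (m + 1)) (Fin (m + 1)) ℝ) with hM
  set v := (Real.sqrt (B ⬝ᵥ B))⁻¹ • Bh + ∑ i : Fin m, α i • Bi i with hv
  have hs : B ⬝ᵥ B ≠ 0 := fun h => hB (dotProduct_self_eq_zero.mp h)
  have hsnn : 0 ≤ B ⬝ᵥ B := Finset.sum_nonneg fun i _ => mul_self_nonneg _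
  have hvB : v ⬝ᵥ B = 1 := by
    rw [hv, add_dotProduct, smul_dotProduct, hBh, smul_dotProduct]
    have hsum : (∑ i : Fin m, α i • Bi i) ⬝ᵥ B = 0 := by
      simp only [dotProduct, Finset.sum_apply, Pi.smul_apply, smul_eq_mul,
        Finset.sum_mul]
      rw [Finset.sum_comm]
      refine Finset.sum_eq_zero fun i _ => ?_
      simp only [mul_assoc, ← Finset.mul_sum]
      rw [show ∑ x, Bi i x * B x = Bi i ⬝ᵥ B from rfl, horth, mul_zero]
    rw [hsum, add_zero, smul_eq_mul, smul_eq_mul, ← mul_assoc, ← mul_inv,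
      Real.mul_self_sqrt hsnn, inv_mul_cancel₀ hs]
  have hfact : l • (1 : Matrix (Fin (m + 1)) (Fin (m + 1)) ℝ) - A + Matrix.vecMulVec B K
      = (Matrix.vecMulVec B v - 1) * M := by
    have h1 : Matrix.vecMulVec B K = Matrix.vecMulVec B v * M := by
      ext i j
      simp only [hK, vecMulVec_apply, Matrix.mul_apply, vecMul, dotProduct,
        Finset.mul_sum]
      exact Finset.sum_congr rfl fun k _ => by ring
    rw [h1, Matrix.sub_mul, Matrix.one_mul, hM]
    abel
  rw [hfact, det_mul]
  have hker : (Matrix.vecMulVec B v - 1).det = 0 := by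
    rw [← Matrix.exists_mulVec_eq_zero_iff]
    refine ⟨B, hB, ?_⟩
    have hmv : Matrix.vecMulVec B v *ᵥ B = (v ⬝ᵥ B) • B := by
      ext i
      rw [Pi.smul_apply, smul_eq_mul]
      simp only [Matrix.mulVec, dotProduct, vecMulVec_apply, Finset.sum_mul]
      exact Finset.sum_congr rfl fun k _ => by ring
    rw [Matrix.sub_mulVec, hmv, hvB, one_smul, Matrix.one_mulVec, sub_self]
  rw [hker, zero_mul]
end

section
/- Chain controllability lemma: suppose (A_0, B_0) of dimension n is controllable (the vectors B_0, A_0 B_0, ..., A_0^{n-1} B_0 span ℝ^n). For each k, let an_{k+1} be a full-row-rank (n-k-1)×(n-k) matrix with an_{k+1} B_k = 0, and define B_{k+1} = an_{k+1} A_k B_k and A_{k+1} so that an_{k+1} A_k = A_{k+1} an_{k+1} on span{B_k, A_k B_k, ...}. Then for every k = 1,...,n-1, dim span{B_k, A_k B_k, ..., A_k^{n-k-1} B_k} = n - k. -/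
open Matrix

/-- Chain controllability lemma: if `(A₀, B₀)` of dimension `n` is controllable
and the quotient chain satisfies `an_{k+1} B_k = 0` with `an_{k+1}` of full row
rank `n-k-1`, `B_{k+1} = an_{k+1} A_k B_k`, and the commutation
`an_{k+1} A_k^{j+1} B_k = A_{k+1}^j B_{k+1}`, then for every `k = 1, …, n-1`,
`dim span{B_k, A_k B_k, …, A_k^{n-k-1} B_k} = n - k`. -/
theorem stmt_14 (n : ℕ)
    (A : ∀ k : ℕ, Matrix (Fin (n - k)) (Fin (n - k)) ℝ)
    (B : ∀ k : ℕ, Fin (n - k) → ℝ)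
    (an : ∀ k : ℕ, Matrix (Fin (n - (k + 1))) (Fin (n - k)) ℝ)
    (hctrl : Submodule.span ℝ
        (Set.range fun j : Fin n => (A 0 ^ (j : ℕ)) *ᵥ B 0) = ⊤)
    (hrank : ∀ k : ℕ, (an k).rank = n - (k + 1))
    (hann : ∀ k : ℕ, an k *ᵥ B k = 0)
    (hBsucc : ∀ k : ℕ, B (k + 1) = an k *ᵥ (A k *ᵥ B k))
    (hcomm : ∀ k j : ℕ,
        an k *ᵥ ((A k ^ (j + 1)) *ᵥ B k) = (A (k + 1) ^ j) *ᵥ B (k + 1)) :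
    ∀ k : ℕ, 1 ≤ k → k ≤ n - 1 →
      Module.finrank ℝ
        (Submodule.span ℝ (Set.range fun j : Fin (n - k) => (A k ^ (j : ℕ)) *ᵥ B k))
        = n - k := by
  suffices h : ∀ m : ℕ, m ≤ n - 1 →
      Submodule.span ℝ (Set.range fun j : Fin (n - m) => (A m ^ (j : ℕ)) *ᵥ B m) = ⊤ by
    intro k hk1 hkn
    rw [h k hkn, finrank_top]
    simp
  intro m
  induction m with
  | zero => intro _; exact hctrl
  | succ m ih =>
    intro hm
    have hm' : m ≤ n - 1 := le_trans (Nat.le_succ m) hm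
    have hspan := ih hm'
    have hn2 : m + 2 ≤ n := by omega
    have hnm : n - m = (n - (m + 1)) + 1 := by omega
    -- surjectivity of mulVecLin (an m)
    have hsurj : Function.Surjective (Matrix.mulVecLin (an m)) := by
      rw [← LinearMap.range_eq_top]
      apply Submodule.eq_top_of_finrank_eq
      have : Module.finrank ℝ (LinearMap.range (Matrix.mulVecLin (an m)))
          = (an m).rank := rfl
      rw [this, hrank m]
      simp
    have hmap : Submodule.map (Matrix.mulVecLin (an m)) ⊤ = ⊤ := by
      rw [Submodule.map_top, LinearMap.range_eq_top]
      exact hsurj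
    have h1 : Submodule.span ℝ
        (Set.range fun j : Fin (n - m) => an m *ᵥ ((A m ^ (j : ℕ)) *ᵥ B m)) = ⊤ := by
      rw [show (Set.range fun j : Fin (n - m) => an m *ᵥ ((A m ^ (j : ℕ)) *ᵥ B m))
          = Matrix.mulVecLin (an m) ''
            (Set.range fun j : Fin (n - m) => (A m ^ (j : ℕ)) *ᵥ B m) by
        rw [← Set.range_comp]; rfl]
      rw [← Submodule.map_span, hspan, hmap]
    rw [← h1]
    apply le_antisymm
    · rw [Submodule.span_le]
      rintro x ⟨j, rfl⟩
      apply Submodule.subset_span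
      refine ⟨⟨(j : ℕ) + 1, ?_⟩, ?_⟩
      · omega
      · simp only
        rw [hcomm m j]
    · rw [Submodule.span_le]
      rintro x ⟨j, rfl⟩
      simp only
      rcases Nat.eq_zero_or_pos (j : ℕ) with h0 | hpos
      · rw [h0, pow_zero, Matrix.one_mulVec, hann m]
        exact Submodule.zero_mem _
      · obtain ⟨i, hi⟩ := Nat.exists_eq_succ_of_ne_zero (Nat.pos_iff_ne_zero.mp hpos)
        rw [hi, hcomm m i]
        apply Submodule.subset_span
        exact ⟨⟨i, by omega⟩, rfl⟩
end

section
/- Contrapositive controllability test: in the quotient chain above, if B_k = 0 for some k ≥ 1, then rank[B_0, A_0 B_0, ..., A_0^{n-1} B_0] < n, i.e. (A_0, B_0) is not controllable. -/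
open Matrix

/-- Contrapositive controllability test: in the quotient chain, if `B_k = 0`
for some `1 ≤ k ≤ n-1`, then the vectors `B₀, A₀B₀, …, A₀^{n-1}B₀` do not span
`ℝⁿ`, i.e. `(A₀, B₀)` is not controllable. -/
theorem stmt_15 (n : ℕ)
    (A : ∀ k : ℕ, Matrix (Fin (n - k)) (Fin (n - k)) ℝ)
    (B : ∀ k : ℕ, Fin (n - k) → ℝ)
    (an : ∀ k : ℕ, Matrix (Fin (n - (k + 1))) (Fin (n - k)) ℝ)
    (hrank : ∀ k : ℕ, (an k).rank = n - (k + 1))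
    (hann : ∀ k : ℕ, an k *ᵥ B k = 0)
    (hBsucc : ∀ k : ℕ, B (k + 1) = an k *ᵥ (A k *ᵥ B k))
    (hcomm : ∀ k j : ℕ,
        an k *ᵥ ((A k ^ (j + 1)) *ᵥ B k) = (A (k + 1) ^ j) *ᵥ B (k + 1)) :
    ∀ k : ℕ, 1 ≤ k → k ≤ n - 1 → B k = 0 →
      Submodule.span ℝ (Set.range fun j : Fin n => (A 0 ^ (j : ℕ)) *ᵥ B 0) ≠ ⊤ := by
  intro k hk1 hkn hBk h
  have hkn' : k < n := by omega
  -- the span of all powers, at each level of the chain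
  set S : ∀ m : ℕ, Submodule ℝ (Fin (n - m) → ℝ) :=
    fun m => Submodule.span ℝ (Set.range fun j : ℕ => (A m ^ j) *ᵥ B m) with hS
  -- S 0 = ⊤
  have hS0 : S 0 = ⊤ := by
    rw [eq_top_iff, ← h, Submodule.span_le]
    rintro _ ⟨j, rfl⟩
    exact Submodule.subset_span ⟨(j : ℕ), rfl⟩
  -- the image of S m under an m is S (m+1)
  have hmap : ∀ m : ℕ, Submodule.map (an m).mulVecLin (S m) = S (m + 1) := by
    intro m
    simp only [hS]
    rw [Submodule.map_span]
    apply le_antisymm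
    · rw [Submodule.span_le]
      rintro _ ⟨_, ⟨j, rfl⟩, rfl⟩
      simp only [Matrix.mulVecLin_apply]
      cases j with
      | zero =>
        simp only [pow_zero, Matrix.one_mulVec, hann m]
        exact Submodule.zero_mem _
      | succ j =>
        rw [hcomm m j]
        exact Submodule.subset_span ⟨j, rfl⟩
    · rw [Submodule.span_le]
      rintro _ ⟨j, rfl⟩
      show A (m + 1) ^ j *ᵥ B (m + 1) ∈ _
      rw [← hcomm m j]
      exact Submodule.subset_span ⟨_, ⟨j + 1, rfl⟩, by simp⟩
  -- the rank of each S m is at least n - m, for m ≤ k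
  have hdim : ∀ m : ℕ, m ≤ k → n - m ≤ Module.finrank ℝ (S m) := by
    intro m hm
    induction m with
    | zero =>
      rw [hS0]
      rw [finrank_top]
      simp [Module.finrank_fin_fun]
    | succ m ih =>
      have hm' : m ≤ k := by omega
      have ih' := ih hm'
      have hf : True := trivial
      -- rank-nullity for the domain restriction
      have h1 : Module.finrank ℝ (Submodule.map (an m).mulVecLin (S m))
          + Module.finrank ℝ (LinearMap.ker ((an m).mulVecLin.domRestrict (S m)))
          = Module.finrank ℝ (S m) := by
        have := LinearMap.finrank_range_add_finrank_ker ((an m).mulVecLin.domRestrict (S m))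
        rwa [LinearMap.range_domRestrict] at this
      -- the kernel of the domain restriction is at most the kernel of f
      have h2 : Module.finrank ℝ (LinearMap.ker ((an m).mulVecLin.domRestrict (S m)))
          ≤ Module.finrank ℝ (LinearMap.ker (an m).mulVecLin) := by
        rw [LinearMap.ker_domRestrict, ← Submodule.finrank_map_subtype_eq]
        exact Submodule.finrank_mono (Submodule.map_comap_le _ _)
      -- the kernel of f has dimension (n - m) - (n - (m+1))
      have h3 : Module.finrank ℝ (LinearMap.ker (an m).mulVecLin)
          = (n - m) - (n - (m + 1)) := by
        have := LinearMap.finrank_range_add_finrank_ker (an m).mulVecLin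
        rw [← Matrix.rank, hrank m, Module.finrank_fin_fun] at this
        omega
      rw [← hmap m]
      have hnm : n - (m + 1) < n - m := by omega
      omega
  -- but S k = ⊥ since B k = 0
  have hSk : S k = ⊥ := by
    apply Submodule.span_eq_bot.2
    rw [hBk]
    rintro _ ⟨j, rfl⟩
    exact Matrix.mulVec_zero _
  have := hdim k le_rfl
  rw [hSk, finrank_bot] at this
  omega
end
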